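/- Let a > 1 and b, c > 0, and let Λ = {(a^j, bk, cm) : j,k ∈ ℤ, m ∈ ℤ²} ⊂ S with weight w ≡ 1. Then Λ has uniform shearlet density D⁺(Λ,w) = D⁻(Λ,w) = 1/(b c² ln a). -/

import Mathlib

open MeasureTheory Real Filter Set
open scoped ENNReal
noncomputable section

/-- The parabolic scaling matrix `A_a = diag(a, √a)` acting on `ℝ²`. -/
def Aa (a : ℝ) (t : ℝ × ℝ) : ℝ × ℝ := (a * t.1, Real.sqrt a * t.2)

/-- The shear matrix `S_s = [[1,s],[0,1]]` acting on `ℝ²`. -/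
def Ss (s : ℝ) (t : ℝ × ℝ) : ℝ × ℝ := (t.1 + s * t.2, t.2)

/-- Underlying space of the shearlet group: `(a, s, t₁, t₂)`. -/
abbrev SG := ℝ × ℝ × ℝ × ℝ

/-- Shearlet group multiplication
`(a,s,t)·(a',s',t') = (a'a, s' + s√a', t' + S_{s'} A_{a'} t)`. -/
def smul (p q : SG) : SG :=
  (q.1 * p.1, q.2.1 + p.2.1 * Real.sqrt q.1, q.2.2 + Ss q.2.1 (Aa q.1 p.2.2))

/-- The box `Q_h = [e^{-h/2}, e^{h/2}) × [-h/2, h/2) × [-h/2, h/2)²`. -/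
def Qbox (h : ℝ) : Set SG :=
  Set.Ico (Real.exp (-h/2)) (Real.exp (h/2)) ×ˢ
    (Set.Ico (-h/2) (h/2) ×ˢ (Set.Ico (-h/2) (h/2) ×ˢ Set.Ico (-h/2) (h/2)))

/-- The left-translated box `Q_h(g) = g · Q_h`. -/
def boxAt (h : ℝ) (g : SG) : Set SG := (fun p => smul g p) '' Qbox h

/-- Weighted number of points of `Λ` in `K`: `#_w(Λ ∩ K)`. -/
def wNum (Λ : Set SG) (w : SG → ℝ) (K : Set SG) : ℝ≥0∞ :=
  ∑' p : ↥(Λ ∩ K), ENNReal.ofReal (w p)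

/-- Upper weighted shearlet density `D⁺(Λ, w)`. -/
def upperDensity (Λ : Set SG) (w : SG → ℝ) : ℝ≥0∞ :=
  Filter.limsup (fun h : ℝ =>
    ⨆ (g : SG) (_ : 0 < g.1), wNum Λ w (boxAt h g) / ENNReal.ofReal (h ^ 4)) Filter.atTop

/-- Lower weighted shearlet density `D⁻(Λ, w)`. -/
def lowerDensity (Λ : Set SG) (w : SG → ℝ) : ℝ≥0∞ :=
  Filter.liminf (fun h : ℝ =>
    ⨅ (g : SG) (_ : 0 < g.1), wNum Λ w (boxAt h g) / ENNReal.ofReal (h ^ 4)) Filter.atTop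

open scoped Topology

/-! ### Integer interval helpers -/

def iIco (d μ h : ℝ) : Finset ℤ := Finset.Ico ⌈(μ - h / 2) / d⌉ ⌈(μ + h / 2) / d⌉

lemma mem_iIco {d : ℝ} (hd : 0 < d) (μ h : ℝ) (k : ℤ) :
    k ∈ iIco d μ h ↔ (μ - h / 2 ≤ d * k ∧ d * k < μ + h / 2) := by
  rw [iIco, Finset.mem_Ico, Int.ceil_le, Int.lt_ceil, div_le_iff₀ hd, lt_div_iff₀ hd]
  constructor <;> rintro ⟨h1, h2⟩ <;> exact ⟨by linarith, by linarith⟩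

lemma iIco_card_le {d : ℝ} (hd : 0 < d) (μ h : ℝ) : (iIco d μ h).card ≤ ⌈h / d⌉.toNat := by
  rw [iIco, Int.card_Ico]
  apply Int.toNat_le_toNat
  have h1 : (μ + h / 2) / d = (μ - h / 2) / d + h / d := by field_simp; ring
  have h2 : ⌈(μ + h / 2) / d⌉ ≤ ⌈(μ - h / 2) / d⌉ + ⌈h / d⌉ := by
    rw [h1]; exact Int.ceil_add_le _ _
  omega

lemma le_iIco_card {d : ℝ} (hd : 0 < d) (μ h : ℝ) : ⌊h / d⌋.toNat ≤ (iIco d μ h).card := by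
  rw [iIco, Int.card_Ico]
  apply Int.toNat_le_toNat
  have h1 : (μ + h / 2) / d = (μ - h / 2) / d + h / d := by field_simp; ring
  have e1 : ((⌈(μ - h / 2) / d⌉ : ℝ)) < (μ - h / 2) / d + 1 := Int.ceil_lt_add_one _
  have e2 : ((⌊h / d⌋ : ℝ)) ≤ h / d := Int.floor_le _
  have e3 : (μ + h / 2) / d ≤ ⌈(μ + h / 2) / d⌉ := Int.le_ceil _
  have : ((⌈(μ - h / 2) / d⌉ + ⌊h / d⌋ : ℤ) : ℝ) < (⌈(μ + h / 2) / d⌉ : ℝ) + 1 := by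
    push_cast; linarith [h1 ▸ e3]
  have := Int.lt_add_one_iff.mp (by exact_mod_cast this)
  omega

lemma offset_lt {lo hi : ℤ} {k : ℤ} {n : ℕ} (hk : k ∈ Finset.Ico lo hi)
    (hn : (Finset.Ico lo hi).card ≤ n) : (k - lo).toNat < n := by
  rw [Finset.mem_Ico] at hk; rw [Int.card_Ico] at hn; omega

lemma add_mem_Ico {lo hi : ℤ} {n : ℕ} (i : ℕ) (hn : n ≤ (Finset.Ico lo hi).card) (hi' : i < n) :
    lo + (i : ℤ) ∈ Finset.Ico lo hi := by
  rw [Int.card_Ico] at hn; rw [Finset.mem_Ico]; omega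

/-! ### Inverse of left translation -/

def invg (g p : SG) : SG :=
  (p.1 / g.1, p.2.1 - g.2.1 * Real.sqrt (p.1 / g.1),
    p.2.2.1 - ((p.1 / g.1) * g.2.2.1 +
      (p.2.1 - g.2.1 * Real.sqrt (p.1 / g.1)) * (Real.sqrt (p.1 / g.1) * g.2.2.2)),
    p.2.2.2 - Real.sqrt (p.1 / g.1) * g.2.2.2)

lemma smul_invg (g p : SG) (hg : g.1 ≠ 0) : smul g (invg g p) = p := by
  unfold smul invg Ss Aa
  refine Prod.ext ?_ (Prod.ext ?_ (Prod.ext ?_ ?_)) <;> simp <;>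
    (try ring) <;> field_simp

lemma eq_invg_of_smul {g q p : SG} (hg : g.1 ≠ 0) (hq : smul g q = p) : q = invg g p := by
  subst hq
  have hu : (smul g q).1 / g.1 = q.1 := by
    show q.1 * g.1 / g.1 = q.1
    exact mul_div_cancel_right₀ _ hg
  unfold invg
  rw [hu]
  unfold smul Ss Aa
  refine Prod.ext ?_ (Prod.ext ?_ (Prod.ext ?_ ?_)) <;> simp <;> try ring

lemma mem_boxAt_iff (g p : SG) (hg : g.1 ≠ 0) (h : ℝ) :
    p ∈ boxAt h g ↔ invg g p ∈ Qbox h := by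
  constructor
  · rintro ⟨q, hq, rfl⟩
    rwa [← eq_invg_of_smul hg rfl]
  · intro hq
    exact ⟨invg g p, hq, smul_invg g p hg⟩

/-! ### Centers -/

def muK (a : ℝ) (g : SG) (j : ℤ) : ℝ := g.2.1 * Real.sqrt (a ^ j / g.1)
def muM1 (a b : ℝ) (g : SG) (j k : ℤ) : ℝ :=
  (a ^ j / g.1) * g.2.2.1 + (b * k - muK a g j) * (Real.sqrt (a ^ j / g.1) * g.2.2.2)
def muM2 (a : ℝ) (g : SG) (j : ℤ) : ℝ := Real.sqrt (a ^ j / g.1) * g.2.2.2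

lemma lattice_mem_boxAt (a b c : ℝ) (ha : 1 < a) (hb : 0 < b) (hc : 0 < c)
    (h : ℝ) (g : SG) (hg : 0 < g.1) (j k m1 m2 : ℤ) :
    ((a ^ j : ℝ), b * k, c * m1, c * m2) ∈ boxAt h g ↔
      (j ∈ iIco (Real.log a) (Real.log g.1) h ∧ k ∈ iIco b (muK a g j) h ∧
       m1 ∈ iIco c (muM1 a b g j k) h ∧ m2 ∈ iIco c (muM2 a g j) h) := by
  have ha0 : (0 : ℝ) < a := lt_trans one_pos ha
  have hzp : (0 : ℝ) < a ^ j := zpow_pos ha0 j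
  have hu : (0 : ℝ) < a ^ j / g.1 := div_pos hzp hg
  have hL : 0 < Real.log a := Real.log_pos ha
  rw [mem_boxAt_iff _ _ hg.ne' h]
  simp only [Qbox, invg, Set.mem_prod, Set.mem_Ico]
  have hlog : Real.log ((a : ℝ) ^ j / g.1) = Real.log a * j - Real.log g.1 := by
    rw [Real.log_div hzp.ne' hg.ne', Real.log_zpow]; ring
  constructor
  · rintro ⟨⟨A1, A2⟩, ⟨B1, B2⟩, ⟨C1, C2⟩, D1, D2⟩
    refine ⟨(mem_iIco hL _ _ _).mpr ?_, (mem_iIco hb _ _ _).mpr ?_,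
      (mem_iIco hc _ _ _).mpr ?_, (mem_iIco hc _ _ _).mpr ?_⟩
    · rw [← Real.le_log_iff_exp_le hu] at A1
      rw [← Real.log_lt_iff_lt_exp hu] at A2
      rw [hlog] at A1 A2
      constructor <;> linarith
    · unfold muK; constructor <;> linarith
    · unfold muM1 muK; constructor <;> linarith
    · unfold muM2; constructor <;> linarith
  · rintro ⟨hJ, hK, hM1, hM2⟩
    have hJ' := (mem_iIco hL _ _ _).mp hJ
    have hK' := (mem_iIco hb _ _ _).mp hK
    have hM1' := (mem_iIco hc _ _ _).mp hM1
    have hM2' := (mem_iIco hc _ _ _).mp hM2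
    unfold muK at hK'
    unfold muM1 muK at hM1'
    unfold muM2 at hM2'
    refine ⟨⟨?_, ?_⟩, ⟨by linarith [hK'.1], by linarith [hK'.2]⟩,
      ⟨by linarith [hM1'.1], by linarith [hM1'.2]⟩,
      ⟨by linarith [hM2'.1], by linarith [hM2'.2]⟩⟩
    · rw [← Real.le_log_iff_exp_le hu, hlog]; linarith [hJ'.1]
    · rw [← Real.log_lt_iff_lt_exp hu, hlog]; linarith [hJ'.2]

/-! ### Recovering lattice indices -/

def jOf (a : ℝ) (p : SG) : ℤ := round (Real.log p.1 / Real.log a)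
def kOf (b : ℝ) (p : SG) : ℤ := round (p.2.1 / b)
def m1Of (c : ℝ) (p : SG) : ℤ := round (p.2.2.1 / c)
def m2Of (c : ℝ) (p : SG) : ℤ := round (p.2.2.2 / c)

lemma psi_phi (a b c : ℝ) (ha : 1 < a) (hb : 0 < b) (hc : 0 < c) (j k m1 m2 : ℤ) :
    jOf a ((a ^ j : ℝ), b * k, c * m1, c * m2) = j ∧
    kOf b ((a ^ j : ℝ), b * k, c * m1, c * m2) = k ∧
    m1Of c ((a ^ j : ℝ), b * k, c * m1, c * m2) = m1 ∧
    m2Of c ((a ^ j : ℝ), b * k, c * m1, c * m2) = m2 := by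
  have hL : Real.log a ≠ 0 := (Real.log_pos ha).ne'
  refine ⟨?_, ?_, ?_, ?_⟩
  · unfold jOf
    simp only [Real.log_zpow]
    rw [mul_div_assoc, div_self hL, mul_one, round_intCast]
  · unfold kOf; simp only []
    rw [mul_div_cancel_left₀ _ hb.ne', round_intCast]
  · unfold m1Of; simp only []
    rw [mul_div_cancel_left₀ _ hc.ne', round_intCast]
  · unfold m2Of; simp only []
    rw [mul_div_cancel_left₀ _ hc.ne', round_intCast]

lemma rep_of_mem (a b c : ℝ) (ha : 1 < a) (hb : 0 < b) (hc : 0 < c) (p : SG)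
    (hp : p ∈ {p : SG | ∃ (j k : ℤ) (m : ℤ × ℤ), p = ((a ^ j : ℝ), b * k, c * m.1, c * m.2)}) :
    p = ((a ^ jOf a p : ℝ), b * kOf b p, c * m1Of c p, c * m2Of c p) := by
  obtain ⟨j, k, m, rfl⟩ := hp
  obtain ⟨h1, h2, h3, h4⟩ := psi_phi a b c ha hb hc j k m.1 m.2
  rw [h1, h2, h3, h4]

lemma iIco_add_mem {d : ℝ} (hd : 0 < d) (μ h : ℝ) {i : ℕ} (hi : i < ⌊h / d⌋.toNat) :
    ⌈(μ - h / 2) / d⌉ + (i : ℤ) ∈ iIco d μ h := by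
  rw [iIco]
  exact add_mem_Ico i (le_iIco_card hd μ h) hi

lemma iIco_off_lt {d : ℝ} {μ h : ℝ} {k : ℤ} (hd : 0 < d) (hk : k ∈ iIco d μ h) :
    (k - ⌈(μ - h / 2) / d⌉).toNat < ⌈h / d⌉.toNat := by
  rw [iIco] at hk
  exact offset_lt hk (iIco_card_le hd μ h)

lemma iIco_lo_le {d μ h : ℝ} {k : ℤ} (hk : k ∈ iIco d μ h) : ⌈(μ - h / 2) / d⌉ ≤ k := by
  rw [iIco, Finset.mem_Ico] at hk; exact hk.1

def phiSG (a b c : ℝ) (j k m1 m2 : ℤ) : SG := ((a ^ j : ℝ), b * k, c * m1, c * m2)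

lemma phiSG_inj (a b c : ℝ) (ha : 1 < a) (hb : 0 < b) (hc : 0 < c)
    {j k m1 m2 j' k' m1' m2' : ℤ} (H : phiSG a b c j k m1 m2 = phiSG a b c j' k' m1' m2') :
    j = j' ∧ k = k' ∧ m1 = m1' ∧ m2 = m2' := by
  unfold phiSG at H
  refine ⟨?_, ?_, ?_, ?_⟩
  · have := congrArg (jOf a) H
    rwa [(psi_phi a b c ha hb hc j k m1 m2).1, (psi_phi a b c ha hb hc j' k' m1' m2').1] at this
  · have := congrArg (kOf b) H
    rwa [(psi_phi a b c ha hb hc j k m1 m2).2.1,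
      (psi_phi a b c ha hb hc j' k' m1' m2').2.1] at this
  · have := congrArg (m1Of c) H
    rwa [(psi_phi a b c ha hb hc j k m1 m2).2.2.1,
      (psi_phi a b c ha hb hc j' k' m1' m2').2.2.1] at this
  · have := congrArg (m2Of c) H
    rwa [(psi_phi a b c ha hb hc j k m1 m2).2.2.2,
      (psi_phi a b c ha hb hc j' k' m1' m2').2.2.2] at this

def Jlo (a h : ℝ) (g : SG) : ℤ := ⌈(Real.log g.1 - h / 2) / Real.log a⌉
def Klo (a b h : ℝ) (g : SG) (j : ℤ) : ℤ := ⌈(muK a g j - h / 2) / b⌉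
def M1lo (a b c h : ℝ) (g : SG) (j k : ℤ) : ℤ := ⌈(muM1 a b g j k - h / 2) / c⌉
def M2lo (a c h : ℝ) (g : SG) (j : ℤ) : ℤ := ⌈(muM2 a g j - h / 2) / c⌉

lemma tsum_one_finprod (n1 n2 n3 n4 : ℕ) :
    ∑' (_ : Fin n1 × Fin n2 × Fin n3 × Fin n4), (1 : ℝ≥0∞)
      = ((n1 * (n2 * (n3 * n4)) : ℕ) : ℝ≥0∞) := by
  rw [tsum_fintype]
  simp [Finset.card_univ, mul_assoc]

lemma count_sandwich (a b c : ℝ) (ha : 1 < a) (hb : 0 < b) (hc : 0 < c)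
    (h : ℝ) (g : SG) (hg : 0 < g.1) :
    ((⌊h / Real.log a⌋.toNat * (⌊h / b⌋.toNat * (⌊h / c⌋.toNat * ⌊h / c⌋.toNat)) : ℕ) : ℝ≥0∞)
      ≤ wNum {p : SG | ∃ (j k : ℤ) (m : ℤ × ℤ),
          p = ((a ^ j : ℝ), b * k, c * m.1, c * m.2)} (fun _ => 1) (boxAt h g) ∧
    wNum {p : SG | ∃ (j k : ℤ) (m : ℤ × ℤ),
          p = ((a ^ j : ℝ), b * k, c * m.1, c * m.2)} (fun _ => 1) (boxAt h g)
      ≤ ((⌈h / Real.log a⌉.toNat * (⌈h / b⌉.toNat * (⌈h / c⌉.toNat * ⌈h / c⌉.toNat)) : ℕ) : ℝ≥0∞) := by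
  have hL : 0 < Real.log a := Real.log_pos ha
  set Λ : Set SG := {p : SG | ∃ (j k : ℤ) (m : ℤ × ℤ),
      p = ((a ^ j : ℝ), b * k, c * m.1, c * m.2)} with hΛ
  have hw : wNum Λ (fun _ => 1) (boxAt h g) = ∑' (_ : ↥(Λ ∩ boxAt h g)), (1 : ℝ≥0∞) := by
    simp [wNum]
  have hmem : ∀ (j k m1 m2 : ℤ), phiSG a b c j k m1 m2 ∈ boxAt h g ↔
      (j ∈ iIco (Real.log a) (Real.log g.1) h ∧ k ∈ iIco b (muK a g j) h ∧
       m1 ∈ iIco c (muM1 a b g j k) h ∧ m2 ∈ iIco c (muM2 a g j) h) :=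
    fun j k m1 m2 => lattice_mem_boxAt a b c ha hb hc h g hg j k m1 m2
  have hphiΛ : ∀ (j k m1 m2 : ℤ), phiSG a b c j k m1 m2 ∈ Λ := by
    intro j k m1 m2; exact ⟨j, k, (m1, m2), rfl⟩
  constructor
  · -- lower bound
    rw [hw, ← tsum_one_finprod]
    have memq : ∀ (q : Fin ⌊h / Real.log a⌋.toNat × Fin ⌊h / b⌋.toNat ×
        Fin ⌊h / c⌋.toNat × Fin ⌊h / c⌋.toNat),
        phiSG a b c (Jlo a h g + (q.1.val : ℤ))
          (Klo a b h g (Jlo a h g + (q.1.val : ℤ)) + (q.2.1.val : ℤ))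
          (M1lo a b c h g (Jlo a h g + (q.1.val : ℤ))
            (Klo a b h g (Jlo a h g + (q.1.val : ℤ)) + (q.2.1.val : ℤ)) + (q.2.2.1.val : ℤ))
          (M2lo a c h g (Jlo a h g + (q.1.val : ℤ)) + (q.2.2.2.val : ℤ)) ∈ Λ ∩ boxAt h g := by
      intro q
      refine ⟨hphiΛ _ _ _ _, (hmem _ _ _ _).mpr ⟨?_, ?_, ?_, ?_⟩⟩
      · exact iIco_add_mem hL _ _ q.1.2
      · exact iIco_add_mem hb _ _ q.2.1.2
      · exact iIco_add_mem hc _ _ q.2.2.1.2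
      · exact iIco_add_mem hc _ _ q.2.2.2.2
    have hinj : Function.Injective (fun q => (⟨_, memq q⟩ : ↥(Λ ∩ boxAt h g))) := by
      intro q q' hqq
      have hv := congrArg Subtype.val hqq
      simp only at hv
      obtain ⟨e1, e2, e3, e4⟩ := phiSG_inj a b c ha hb hc hv
      have i1 : q.1 = q'.1 := by
        apply Fin.ext; omega
      have i2 : q.2.1 = q'.2.1 := by
        apply Fin.ext; rw [i1] at e2; omega
      have i3 : q.2.2.1 = q'.2.2.1 := by
        apply Fin.ext; rw [i1, i2] at e3; omega
      have i4 : q.2.2.2 = q'.2.2.2 := by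
        apply Fin.ext; rw [i1] at e4; omega
      exact Prod.ext i1 (Prod.ext i2 (Prod.ext i3 i4))
    exact ENNReal.tsum_comp_le_tsum_of_injective hinj (fun _ => 1)
  · -- upper bound
    rw [hw, ← tsum_one_finprod]
    have hforall : ∀ p : ↥(Λ ∩ boxAt h g),
        jOf a p.1 ∈ iIco (Real.log a) (Real.log g.1) h ∧
        kOf b p.1 ∈ iIco b (muK a g (jOf a p.1)) h ∧
        m1Of c p.1 ∈ iIco c (muM1 a b g (jOf a p.1) (kOf b p.1)) h ∧
        m2Of c p.1 ∈ iIco c (muM2 a g (jOf a p.1)) h := by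
      intro p
      have h1 : p.1 ∈ Λ := p.2.1
      have h2 : p.1 ∈ boxAt h g := p.2.2
      have h3 := rep_of_mem a b c ha hb hc p.1 h1
      rw [h3] at h2
      exact (hmem _ _ _ _).mp h2
    have hmono : Function.Injective (fun p : ↥(Λ ∩ boxAt h g) =>
        ((⟨(jOf a p.1 - Jlo a h g).toNat, iIco_off_lt hL (hforall p).1⟩ : Fin _),
         (⟨(kOf b p.1 - Klo a b h g (jOf a p.1)).toNat, iIco_off_lt hb (hforall p).2.1⟩ : Fin _),
         (⟨(m1Of c p.1 - M1lo a b c h g (jOf a p.1) (kOf b p.1)).toNat,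
            iIco_off_lt hc (hforall p).2.2.1⟩ : Fin _),
         (⟨(m2Of c p.1 - M2lo a c h g (jOf a p.1)).toNat,
            iIco_off_lt hc (hforall p).2.2.2⟩ : Fin _))) := by
      intro p p' hpp
      simp only [Prod.mk.injEq, Fin.mk.injEq, Fin.ext_iff, Fin.val_mk] at hpp
      obtain ⟨e1, e2, e3, e4⟩ := hpp
      have l1 := iIco_lo_le (hforall p).1
      have l1' := iIco_lo_le (hforall p').1
      have ej : jOf a p.1 = jOf a p'.1 := by
        unfold Jlo at *; omega
      have l2 := iIco_lo_le (hforall p).2.1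
      have l2' := iIco_lo_le (hforall p').2.1
      rw [ej] at e2 l2
      have ek : kOf b p.1 = kOf b p'.1 := by
        unfold Klo at *; omega
      have l3 := iIco_lo_le (hforall p).2.2.1
      have l3' := iIco_lo_le (hforall p').2.2.1
      rw [ej, ek] at e3 l3
      have em1 : m1Of c p.1 = m1Of c p'.1 := by
        unfold M1lo at *; omega
      have l4 := iIco_lo_le (hforall p).2.2.2
      have l4' := iIco_lo_le (hforall p').2.2.2
      rw [ej] at e4 l4
      have em2 : m2Of c p.1 = m2Of c p'.1 := by
        unfold M2lo at *; omega
      apply Subtype.ext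
      rw [rep_of_mem a b c ha hb hc p.1 p.2.1, rep_of_mem a b c ha hb hc p'.1 p'.2.1,
        ej, ek, em1, em2]
    exact ENNReal.tsum_comp_le_tsum_of_injective hmono (fun _ => 1)

lemma floor_toNat_ge (d h : ℝ) (hd : 0 < d) (hh : 0 ≤ h) :
    h / d + (-1) ≤ ((⌊h / d⌋.toNat : ℕ) : ℝ) := by
  have hnn : 0 ≤ ⌊h / d⌋ := Int.floor_nonneg.mpr (by positivity)
  have e : ((⌊h / d⌋.toNat : ℕ) : ℝ) = ((⌊h / d⌋ : ℤ) : ℝ) := by exact_mod_cast Int.toNat_of_nonneg hnn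
  rw [e]
  linarith [Int.sub_one_lt_floor (h / d)]

lemma ceil_toNat_le (d h : ℝ) (hd : 0 < d) (hh : 0 ≤ h) :
    ((⌈h / d⌉.toNat : ℕ) : ℝ) ≤ h / d + 1 := by
  have hnn : 0 ≤ ⌈h / d⌉ := Int.ceil_nonneg (by positivity)
  have e : ((⌈h / d⌉.toNat : ℕ) : ℝ) = ((⌈h / d⌉ : ℤ) : ℝ) := by exact_mod_cast Int.toNat_of_nonneg hnn
  rw [e]
  linarith [Int.ceil_lt_add_one (h / d)]

lemma prod_bound_lo (a b c h : ℝ) (ha : 1 < a) (hb : 0 < b) (hc : 0 < c)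
    (h1 : Real.log a ≤ h) (h2 : b ≤ h) (h3 : c ≤ h) :
    (h / Real.log a + (-1)) * ((h / b + (-1)) * ((h / c + (-1)) * (h / c + (-1))))
      ≤ ((⌊h / Real.log a⌋.toNat * (⌊h / b⌋.toNat * (⌊h / c⌋.toNat * ⌊h / c⌋.toNat)) : ℕ) : ℝ) := by
  have hL : 0 < Real.log a := Real.log_pos ha
  have hh : 0 ≤ h := le_trans hb.le h2
  have nL : 0 ≤ h / Real.log a + (-1) := by
    have : 1 ≤ h / Real.log a := (one_le_div hL).mpr h1
    linarith
  have nb : 0 ≤ h / b + (-1) := by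
    have : 1 ≤ h / b := (one_le_div hb).mpr h2
    linarith
  have nc : 0 ≤ h / c + (-1) := by
    have : 1 ≤ h / c := (one_le_div hc).mpr h3
    linarith
  have fL := floor_toNat_ge (Real.log a) h hL hh
  have fb := floor_toNat_ge b h hb hh
  have fc := floor_toNat_ge c h hc hh
  push_cast
  have s1 : (h / c + (-1)) * (h / c + (-1)) ≤ ((⌊h / c⌋.toNat : ℕ) : ℝ) * ((⌊h / c⌋.toNat : ℕ) : ℝ) :=
    mul_le_mul fc fc nc (by positivity)
  have s2 : (h / b + (-1)) * ((h / c + (-1)) * (h / c + (-1)))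
      ≤ ((⌊h / b⌋.toNat : ℕ) : ℝ) * (((⌊h / c⌋.toNat : ℕ) : ℝ) * ((⌊h / c⌋.toNat : ℕ) : ℝ)) :=
    mul_le_mul fb s1 (by positivity) (by positivity)
  exact mul_le_mul fL s2 (by positivity) (by positivity)

lemma prod_bound_hi (a b c h : ℝ) (ha : 1 < a) (hb : 0 < b) (hc : 0 < c) (hh : 0 ≤ h) :
    ((⌈h / Real.log a⌉.toNat * (⌈h / b⌉.toNat * (⌈h / c⌉.toNat * ⌈h / c⌉.toNat)) : ℕ) : ℝ)
      ≤ (h / Real.log a + 1) * ((h / b + 1) * ((h / c + 1) * (h / c + 1))) := by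
  have hL : 0 < Real.log a := Real.log_pos ha
  have fL := ceil_toNat_le (Real.log a) h hL hh
  have fb := ceil_toNat_le b h hb hh
  have fc := ceil_toNat_le c h hc hh
  push_cast
  have s1 : ((⌈h / c⌉.toNat : ℕ) : ℝ) * ((⌈h / c⌉.toNat : ℕ) : ℝ) ≤ (h / c + 1) * (h / c + 1) :=
    mul_le_mul fc fc (by positivity) (by positivity)
  have s2 : ((⌈h / b⌉.toNat : ℕ) : ℝ) * (((⌈h / c⌉.toNat : ℕ) : ℝ) * ((⌈h / c⌉.toNat : ℕ) : ℝ))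
      ≤ (h / b + 1) * ((h / c + 1) * (h / c + 1)) :=
    mul_le_mul fb s1 (by positivity) (by positivity)
  exact mul_le_mul fL s2 (by positivity) (by positivity)

open scoped Topology in
lemma tendsto_ratio (L b c s : ℝ) (hL : 0 < L) (hb : 0 < b) (hc : 0 < c) :
    Tendsto (fun h : ℝ => ((h / L + s) * ((h / b + s) * ((h / c + s) * (h / c + s)))) / h ^ 4)
      atTop (𝓝 (1 / (b * c ^ 2 * L))) := by
  have hz : Tendsto (fun h : ℝ => s / h) atTop (𝓝 0) :=
    Tendsto.div_atTop tendsto_const_nhds tendsto_id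
  have h1 : Tendsto (fun h : ℝ =>
      (1 / L + s / h) * ((1 / b + s / h) * ((1 / c + s / h) * (1 / c + s / h)))) atTop
      (𝓝 ((1 / L + 0) * ((1 / b + 0) * ((1 / c + 0) * (1 / c + 0))))) :=
    (tendsto_const_nhds.add hz).mul ((tendsto_const_nhds.add hz).mul
      ((tendsto_const_nhds.add hz).mul (tendsto_const_nhds.add hz)))
  have hpt : (1 / L + 0) * ((1 / b + 0) * ((1 / c + 0) * (1 / c + 0))) = 1 / (b * c ^ 2 * L) := by
    field_simp; ring
  rw [hpt] at h1
  refine h1.congr' ?_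
  filter_upwards [eventually_gt_atTop (0 : ℝ)] with h hh
  rw [eq_div_iff (by positivity : (h : ℝ) ^ 4 ≠ 0)]
  field_simp


/-- The parameter set `Λ = {(a^j, bk, cm)}` of a regular shearlet system has uniform
shearlet density `D⁺(Λ,1) = D⁻(Λ,1) = 1/(b c² ln a)`. -/
theorem regular_shearlet_uniform_density (a b c : ℝ) (ha : 1 < a) (hb : 0 < b) (hc : 0 < c) :
    upperDensity {p : SG | ∃ (j k : ℤ) (m : ℤ × ℤ),
        p = ((a ^ j : ℝ), b * k, c * m.1, c * m.2)} (fun _ => 1)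
      = ENNReal.ofReal (1 / (b * c ^ 2 * Real.log a)) ∧
    lowerDensity {p : SG | ∃ (j k : ℤ) (m : ℤ × ℤ),
        p = ((a ^ j : ℝ), b * k, c * m.1, c * m.2)} (fun _ => 1)
      = ENNReal.ofReal (1 / (b * c ^ 2 * Real.log a)) := by
  have hL : 0 < Real.log a := Real.log_pos ha
  set Λ : Set SG := {p : SG | ∃ (j k : ℤ) (m : ℤ × ℤ),
      p = ((a ^ j : ℝ), b * k, c * m.1, c * m.2)} with hΛ
  set flo : ℝ → ℝ := fun h =>
    ((h / Real.log a + (-1)) * ((h / b + (-1)) * ((h / c + (-1)) * (h / c + (-1))))) / h ^ 4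
    with hflo
  set fhi : ℝ → ℝ := fun h =>
    ((h / Real.log a + 1) * ((h / b + 1) * ((h / c + 1) * (h / c + 1)))) / h ^ 4 with hfhi
  have tlo : Tendsto (fun h : ℝ => ENNReal.ofReal (flo h)) atTop
      (𝓝 (ENNReal.ofReal (1 / (b * c ^ 2 * Real.log a)))) :=
    ENNReal.tendsto_ofReal (tendsto_ratio (Real.log a) b c (-1) hL hb hc)
  have thi : Tendsto (fun h : ℝ => ENNReal.ofReal (fhi h)) atTop
      (𝓝 (ENNReal.ofReal (1 / (b * c ^ 2 * Real.log a)))) :=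
    ENNReal.tendsto_ofReal (tendsto_ratio (Real.log a) b c 1 hL hb hc)
  have hev : ∀ᶠ h in atTop, ∀ g : SG, 0 < g.1 →
      ENNReal.ofReal (flo h) ≤ wNum Λ (fun _ => 1) (boxAt h g) / ENNReal.ofReal (h ^ 4) ∧
      wNum Λ (fun _ => 1) (boxAt h g) / ENNReal.ofReal (h ^ 4) ≤ ENNReal.ofReal (fhi h) := by
    filter_upwards [eventually_ge_atTop (Real.log a), eventually_ge_atTop b,
      eventually_ge_atTop c, eventually_gt_atTop (0 : ℝ)] with h h1 h2 h3 h4 g hg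
    have hcnt := count_sandwich a b c ha hb hc h g hg
    have hpow : (0 : ℝ) < h ^ 4 := by positivity
    constructor
    · have step : ENNReal.ofReal
          ((h / Real.log a + (-1)) * ((h / b + (-1)) * ((h / c + (-1)) * (h / c + (-1)))))
          ≤ wNum Λ (fun _ => 1) (boxAt h g) := by
        refine le_trans (ENNReal.ofReal_le_ofReal
          (prod_bound_lo a b c h ha hb hc h1 h2 h3)) ?_
        rw [ENNReal.ofReal_natCast]
        exact hcnt.1
      rw [hflo]
      simp only []
      rw [ENNReal.ofReal_div_of_pos hpow]
      exact ENNReal.div_le_div_right step _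
    · have step : wNum Λ (fun _ => 1) (boxAt h g) ≤ ENNReal.ofReal
          ((h / Real.log a + 1) * ((h / b + 1) * ((h / c + 1) * (h / c + 1)))) := by
        refine le_trans hcnt.2 ?_
        rw [← ENNReal.ofReal_natCast]
        exact ENNReal.ofReal_le_ofReal (prod_bound_hi a b c h ha hb hc h4.le)
      rw [hfhi]
      simp only []
      rw [ENNReal.ofReal_div_of_pos hpow]
      exact ENNReal.div_le_div_right step _
  constructor
  · rw [upperDensity]
    refine le_antisymm ?_ ?_
    · refine le_trans (limsup_le_limsup ?_) (le_of_eq thi.limsup_eq)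
      filter_upwards [hev] with h hh
      exact iSup₂_le fun g hg => (hh g hg).2
    · refine le_trans (le_of_eq tlo.limsup_eq.symm) (limsup_le_limsup ?_)
      filter_upwards [hev] with h hh
      refine le_trans ((hh ((1 : ℝ), (0 : ℝ), (0 : ℝ), (0 : ℝ)) one_pos).1) ?_
      exact le_iSup₂ (f := fun (g : SG) (_ : 0 < g.1) =>
        wNum Λ (fun _ => 1) (boxAt h g) / ENNReal.ofReal (h ^ 4))
        ((1 : ℝ), (0 : ℝ), (0 : ℝ), (0 : ℝ)) one_pos
  · rw [lowerDensity]
    refine le_antisymm ?_ ?_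
    · refine le_trans (liminf_le_liminf ?_) (le_of_eq thi.liminf_eq)
      filter_upwards [hev] with h hh
      refine le_trans (iInf₂_le (f := fun (g : SG) (_ : 0 < g.1) =>
        wNum Λ (fun _ => 1) (boxAt h g) / ENNReal.ofReal (h ^ 4))
        ((1 : ℝ), (0 : ℝ), (0 : ℝ), (0 : ℝ)) one_pos) ?_
      exact (hh ((1 : ℝ), (0 : ℝ), (0 : ℝ), (0 : ℝ)) one_pos).2
    · refine le_trans (le_of_eq tlo.liminf_eq.symm) (liminf_le_liminf ?_)
      filter_upwards [hev] with h hh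
      exact le_iInf₂ fun g hg => (hh g hg).1


end
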